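/- Fix σ > 0 and μ ∈ ℝ, and for each k > 2 let F_k(x) = (1/2)·(1 − ((x − μ)/σ)·√(2/((k − 1)(k − 2))))^{−k} for x ≤ μ and F_k(x) = 1 − (1/2)·(1 + ((x − μ)/σ)·√(2/((k − 1)(k − 2))))^{−k} for x > μ. Then for every x ∈ ℝ, lim_{k→∞} F_k(x) = F(x), where F(x) = (1/2)·exp((x − μ)·√2/σ) for x ≤ μ and F(x) = 1 − (1/2)·exp(−(x − μ)·√2/σ) for x > μ (the cumulative distribution function of the Laplace distribution with mean μ and variance σ²). -/

import Mathlib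

open MeasureTheory Real Filter

/-- The cdf of the SP-distribution with parameters `k`, `μ`, `σ`. -/
noncomputable def spCdf (k σ μ x : ℝ) : ℝ :=
  if x ≤ μ then 1 / 2 * (1 - (x - μ) / σ * Real.sqrt (2 / ((k - 1) * (k - 2)))) ^ (-k)
  else 1 - 1 / 2 * (1 + (x - μ) / σ * Real.sqrt (2 / ((k - 1) * (k - 2)))) ^ (-k)

/-- The cdf of the Laplace distribution with mean `μ` and variance `σ²`. -/
noncomputable def laplaceCdf (σ μ x : ℝ) : ℝ :=
  if x ≤ μ then 1 / 2 * Real.exp ((x - μ) * Real.sqrt 2 / σ)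
  else 1 - 1 / 2 * Real.exp (-((x - μ) * Real.sqrt 2 / σ))

lemma sp_sLim : Tendsto (fun k : ℝ => Real.sqrt (2 / ((k - 1) * (k - 2)))) atTop (nhds 0) := by
  have h : Tendsto (fun k : ℝ => (k - 1) * (k - 2)) atTop atTop := by
    apply Filter.Tendsto.atTop_mul_atTop₀
    · simpa [sub_eq_add_neg] using tendsto_atTop_add_const_right atTop (-1 : ℝ) tendsto_id
    · simpa [sub_eq_add_neg] using tendsto_atTop_add_const_right atTop (-2 : ℝ) tendsto_id
  have h2 : Tendsto (fun k : ℝ => 2 / ((k - 1) * (k - 2))) atTop (nhds 0) :=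
    tendsto_const_nhds.div_atTop h
  simpa using h2.sqrt

lemma sp_ksLim : Tendsto (fun k : ℝ => k * Real.sqrt (2 / ((k - 1) * (k - 2)))) atTop
    (nhds (Real.sqrt 2)) := by
  have h0 : Tendsto (fun k : ℝ => k⁻¹) atTop (nhds 0) := tendsto_inv_atTop_zero
  have h1 : Tendsto (fun k : ℝ => 2 / ((1 - 1 / k) * (1 - 2 / k))) atTop (nhds 2) := by
    have ha : Tendsto (fun k : ℝ => (1 - 1 / k) * (1 - 2 / k)) atTop (nhds 1) := by
      have hb : Tendsto (fun k : ℝ => 1 - 1 / k) atTop (nhds 1) := by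
        simpa using tendsto_const_nhds.sub (h0.const_mul 1 |>.congr (fun k => by ring))
      have hc : Tendsto (fun k : ℝ => 1 - 2 / k) atTop (nhds 1) := by
        simpa using tendsto_const_nhds.sub (h0.const_mul 2 |>.congr (fun k => by rw [div_eq_mul_inv, mul_comm]))
      simpa using hb.mul hc
    have h3 := (tendsto_const_nhds (x := (2:ℝ))).div ha (by norm_num)
    simp only [div_one] at h3
    exact h3
  have h2 := h1.sqrt
  apply h2.congr'
  filter_upwards [eventually_gt_atTop (2 : ℝ)] with k hk
  have hk0 : (0 : ℝ) < k := by linarith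
  have hk1 : k - 1 ≠ 0 := by intro h; nlinarith
  have hk2 : k - 2 ≠ 0 := by intro h; nlinarith
  have : (2 : ℝ) / ((1 - 1 / k) * (1 - 2 / k)) = k ^ 2 * (2 / ((k - 1) * (k - 2))) := by
    field_simp
  rw [this, Real.sqrt_mul (by positivity), Real.sqrt_sq hk0.le]

lemma sp_rpowLim (t : ℝ) (ht : 0 ≤ t) :
    Tendsto (fun k : ℝ => (1 + t * Real.sqrt (2 / ((k - 1) * (k - 2)))) ^ (-k)) atTop
      (nhds (Real.exp (-(Real.sqrt 2 * t)))) := by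
  set s : ℝ → ℝ := fun k => Real.sqrt (2 / ((k - 1) * (k - 2))) with hs
  -- derivative of log(1 + t v) at 0 is t
  have hd : HasDerivAt (fun v : ℝ => Real.log (1 + t * v)) t 0 := by
    have h : HasDerivAt (fun v : ℝ => 1 + t * v) t 0 := by
      simpa using ((hasDerivAt_id (0:ℝ)).const_mul t).const_add 1
    simpa using h.log (by norm_num)
  have hslope : Tendsto (fun v : ℝ => Real.log (1 + t * v) / v) (nhdsWithin 0 {(0:ℝ)}ᶜ)
      (nhds t) := by
    have := hasDerivAt_iff_tendsto_slope.mp hd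
    apply this.congr'
    filter_upwards [self_mem_nhdsWithin] with v hv
    simp [slope, hv, Real.log_one, div_eq_inv_mul]
  have hsmem : Tendsto s atTop (nhdsWithin 0 {(0:ℝ)}ᶜ) := by
    rw [tendsto_nhdsWithin_iff]
    refine ⟨sp_sLim, ?_⟩
    filter_upwards [eventually_gt_atTop (2 : ℝ)] with k hk
    have : 0 < 2 / ((k - 1) * (k - 2)) := by
      apply div_pos (by norm_num); nlinarith
    simp only [Set.mem_compl_iff, Set.mem_singleton_iff, hs]
    positivity
  have hcomp : Tendsto (fun k => Real.log (1 + t * s k) / s k) atTop (nhds t) :=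
    hslope.comp hsmem
  have hlog : Tendsto (fun k : ℝ => -k * Real.log (1 + t * s k)) atTop
      (nhds (-(Real.sqrt 2 * t))) := by
    have hmul : Tendsto (fun k : ℝ => (k * s k) * (Real.log (1 + t * s k) / s k)) atTop
        (nhds (Real.sqrt 2 * t)) := sp_ksLim.mul hcomp
    have := hmul.neg
    apply this.congr'
    filter_upwards [eventually_gt_atTop (2 : ℝ)] with k hk
    have hspos : 0 < s k := by
      have : 0 < 2 / ((k - 1) * (k - 2)) := by
        apply div_pos (by norm_num); nlinarith
      simpa [hs] using Real.sqrt_pos.mpr this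
    field_simp
  have hexp := (Real.continuous_exp.tendsto _).comp hlog
  apply hexp.congr'
  filter_upwards [eventually_gt_atTop (2 : ℝ)] with k hk
  have hspos : 0 ≤ s k := Real.sqrt_nonneg _
  have hbase : 0 < 1 + t * s k := by nlinarith
  simp only [Function.comp]
  rw [Real.rpow_def_of_pos hbase]
  ring_nf

/-- As `k → ∞`, the SP-distribution cdf converges pointwise to the Laplace cdf. -/
theorem spCdf_tendsto_laplaceCdf (σ μ : ℝ) (hσ : 0 < σ) (x : ℝ) :
    Tendsto (fun k : ℝ => spCdf k σ μ x) atTop (nhds (laplaceCdf σ μ x)) := by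
  by_cases hx : x ≤ μ
  · simp only [spCdf, laplaceCdf, if_pos hx]
    have ht : 0 ≤ -((x - μ) / σ) := by
      have : (x - μ) / σ ≤ 0 := div_nonpos_of_nonpos_of_nonneg (by linarith) hσ.le
      linarith
    have h := (sp_rpowLim _ ht).const_mul (1 / 2 : ℝ)
    have heq : ∀ k : ℝ, 1 / 2 * (1 + -((x - μ) / σ) * Real.sqrt (2 / ((k - 1) * (k - 2)))) ^ (-k)
        = 1 / 2 * (1 - (x - μ) / σ * Real.sqrt (2 / ((k - 1) * (k - 2)))) ^ (-k) := by
      intro k; ring_nf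
    have h2 := h.congr heq
    convert h2 using 2
    rw [← Real.exp_eq_exp]
    congr 1
    ring_nf
  · simp only [spCdf, laplaceCdf, if_neg hx]
    push_neg at hx
    have ht : 0 ≤ (x - μ) / σ := div_nonneg (by linarith) hσ.le
    have h := ((sp_rpowLim _ ht).const_mul (1 / 2 : ℝ)).const_sub 1
    convert h using 2
    rw [← Real.exp_eq_exp]
    congr 1
    ring_nf
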